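/- Let z, w ∈ ℝ^m satisfy: (a) z_i = 0 implies w_i = 0; (b) z_i = z_j implies w_i = w_j and z_i = -z_j implies w_i = -w_j; (c) for all i with z_i ≠ 0, 0 ≤ w_i/z_i ≤ 1; (d) for all i ≠ j with z_i ≠ z_j, 0 ≤ (w_i - w_j)/(z_i - z_j) ≤ 1; (e) for all i ≠ j with z_i ≠ -z_j, 0 ≤ (w_i + w_j)/(z_i + z_j) ≤ 1. Then there exists an odd function φ : ℝ → ℝ, slope-restricted in [0,1], with φ(z_i) = w_i and φ(-z_i) = -w_i for all i. -/
import Mathlib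


/-- Symmetric finite data satisfying the incremental slope[0,1] conditions can be
interpolated by an odd, globally slope[0,1]-restricted function. -/
theorem stmt_10 {m : ℕ} (z w : Fin m → ℝ)
    (ha : ∀ i, z i = 0 → w i = 0)
    (hb : ∀ i j, z i = z j → w i = w j)
    (hb' : ∀ i j, z i = -z j → w i = -w j)
    (hc : ∀ i, z i ≠ 0 → 0 ≤ w i / z i ∧ w i / z i ≤ 1)
    (hd : ∀ i j, i ≠ j → z i ≠ z j →
      0 ≤ (w i - w j) / (z i - z j) ∧ (w i - w j) / (z i - z j) ≤ 1)
    (he : ∀ i j, i ≠ j → z i ≠ -z j →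
      0 ≤ (w i + w j) / (z i + z j) ∧ (w i + w j) / (z i + z j) ≤ 1) :
    ∃ φ : ℝ → ℝ, (∀ t : ℝ, φ (-t) = -φ t) ∧ φ 0 = 0 ∧
      (∀ p q : ℝ, p ≠ q → 0 ≤ (φ p - φ q) / (p - q) ∧ (φ p - φ q) / (p - q) ≤ 1) ∧
      (∀ i, φ (z i) = w i ∧ φ (-z i) = -w i) := by
  classical
  let ι := Option (Fin m × Bool)
  let X : ι → ℝ := fun a => match a with
    | none => 0
    | some (i, false) => z i
    | some (i, true) => -z i
  let Y : ι → ℝ := fun a => match a with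
    | none => 0
    | some (i, false) => w i
    | some (i, true) => -w i
  have hratio : ∀ v d : ℝ, 0 < d → 0 ≤ v / d → v / d ≤ 1 → 0 ≤ v ∧ v ≤ d := by
    intro v d hd0 h0 h1
    have hv : v = v / d * d := (div_mul_cancel₀ v hd0.ne').symm
    constructor <;> nlinarith
  -- equal abscissas give equal ordinates
  have keq : ∀ a b : ι, X a = X b → Y a = Y b := by
    rintro (_ | ⟨i, (_|_)⟩) (_ | ⟨j, (_|_)⟩) h <;> simp only [X, Y] at h ⊢ <;>
    first
      | rfl
      | exact (ha j h.symm).symm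
      | exact ha i h
      | exact hb i j h
      | exact hb' i j h
      | (have h1 : z j = 0 := by linarith
         rw [ha j h1]; ring)
      | (rw [ha i (by linarith)]; ring)
      | (have h1 : w j = -w i := hb' j i (by linarith); linarith)
      | (have h1 : w i = w j := hb i j (by linarith); linarith)
  -- slope conditions for distinct abscissas
  have kslope : ∀ a b : ι, X a ≠ X b →
      0 ≤ (Y b - Y a) / (X b - X a) ∧ (Y b - Y a) / (X b - X a) ≤ 1 := by
    rintro (_ | ⟨i, (_|_)⟩) (_ | ⟨j, (_|_)⟩) h <;> simp only [X, Y] at h ⊢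
    · exact absurd rfl h
    · rw [sub_zero, sub_zero]
      exact hc j (Ne.symm h)
    · rw [sub_zero, sub_zero, neg_div_neg_eq]
      exact hc j (fun h0 => h (by simp [h0]))
    · rw [zero_sub, zero_sub, neg_div_neg_eq]
      exact hc i h
    · have hij : j ≠ i := by rintro rfl; exact h rfl
      exact hd j i hij (Ne.symm h)
    · rw [show -w j - w i = -(w i + w j) by ring, show -z j - z i = -(z i + z j) by ring,
        neg_div_neg_eq]
      by_cases hij : i = j
      · subst hij
        have hz : z i ≠ 0 := fun h0 => h (by simp [h0])
        rw [show w i + w i = 2 * w i by ring, show z i + z i = 2 * z i by ring,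
          mul_div_mul_left _ _ (two_ne_zero)]
        exact hc i hz
      · exact he i j hij h
    · rw [zero_sub, zero_sub, neg_neg, neg_neg]
      exact hc i (fun h0 => h (by simp [h0]))
    · rw [show w j - -w i = w j + w i by ring, show z j - -z i = z j + z i by ring]
      by_cases hij : j = i
      · subst hij
        have hz : z j ≠ 0 := fun h0 => h (by simp [h0])
        rw [show w j + w j = 2 * w j by ring, show z j + z j = 2 * z j by ring,
          mul_div_mul_left _ _ (two_ne_zero)]
        exact hc j hz
      · exact he j i hij (fun h0 => h h0.symm)
    · rw [show -w j - -w i = w i - w j by ring, show -z j - -z i = z i - z j by ring]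
      have hij : i ≠ j := by rintro rfl; exact h rfl
      exact hd i j hij (fun h0 => h (by simp [h0]))
  have key : ∀ a b : ι, X a ≤ X b → 0 ≤ Y b - Y a ∧ Y b - Y a ≤ X b - X a := by
    intro a b hab
    rcases eq_or_lt_of_le hab with h | h
    · rw [keq a b h]; exact ⟨by linarith, by linarith⟩
    · obtain ⟨h0, h1⟩ := kslope a b h.ne
      exact hratio (Y b - Y a) (X b - X a) (by linarith) h0 h1
  have hne : (Finset.univ : Finset ι).Nonempty := ⟨none, Finset.mem_univ _⟩
  let φmax : ℝ → ℝ := fun t => Finset.univ.sup' hne (fun a => Y a + min 0 (t - X a))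
  let φmin : ℝ → ℝ := fun t => Finset.univ.inf' hne (fun a => Y a + max 0 (t - X a))
  have hinterpmax : ∀ a : ι, φmax (X a) = Y a := by
    intro a
    apply le_antisymm
    · apply Finset.sup'_le
      intro b _
      rcases le_total (X a) (X b) with hab | hab
      · obtain ⟨h1, h2⟩ := key a b hab
        have h3 : min 0 (X a - X b) ≤ X a - X b := min_le_right _ _
        linarith
      · obtain ⟨h1, h2⟩ := key b a hab
        have h3 : min 0 (X a - X b) ≤ 0 := min_le_left _ _
        linarith
    · have h4 := Finset.le_sup' (fun b => Y b + min 0 (X a - X b)) (Finset.mem_univ a)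
      simp only [sub_self, min_self, add_zero] at h4
      exact h4
  have hinterpmin : ∀ a : ι, φmin (X a) = Y a := by
    intro a
    apply le_antisymm
    · have h4 := Finset.inf'_le (fun b => Y b + max 0 (X a - X b)) (Finset.mem_univ a)
      simp only [sub_self, max_self, add_zero] at h4
      exact h4
    · apply Finset.le_inf'
      intro b _
      rcases le_total (X a) (X b) with hab | hab
      · obtain ⟨h1, h2⟩ := key a b hab
        have h3 : (0:ℝ) ≤ max 0 (X a - X b) := le_max_left _ _
        linarith
      · obtain ⟨h1, h2⟩ := key b a hab
        have h3 : X a - X b ≤ max 0 (X a - X b) := le_max_right _ _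
        linarith
  have hmax_mono : ∀ p q : ℝ, p ≤ q → φmax p ≤ φmax q := by
    intro p q hpq
    apply Finset.sup'_le
    intro b _
    have h1 : min 0 (p - X b) ≤ min 0 (q - X b) :=
      min_le_min (le_refl (0:ℝ)) (by linarith)
    have h2 : Y b + min 0 (q - X b) ≤ φmax q :=
      Finset.le_sup' (fun a => Y a + min 0 (q - X a)) (Finset.mem_univ b)
    linarith
  have hmax_lip : ∀ p q : ℝ, p ≤ q → φmax q ≤ φmax p + (q - p) := by
    intro p q hpq
    apply Finset.sup'_le
    intro b _
    have h1 : min 0 (q - X b) ≤ min 0 (p - X b) + (q - p) := by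
      rcases le_total (p - X b) 0 with h | h
      · rcases le_total (q - X b) 0 with h' | h'
        · rw [min_eq_right h, min_eq_right h']; linarith
        · rw [min_eq_right h, min_eq_left h']; linarith
      · rw [min_eq_left h]
        have := min_le_left 0 (q - X b); linarith
    have h2 : Y b + min 0 (p - X b) ≤ φmax p :=
      Finset.le_sup' (fun a => Y a + min 0 (p - X a)) (Finset.mem_univ b)
    linarith
  have hmin_mono : ∀ p q : ℝ, p ≤ q → φmin p ≤ φmin q := by
    intro p q hpq
    apply Finset.le_inf'
    intro b _
    have h1 : max 0 (p - X b) ≤ max 0 (q - X b) :=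
      max_le_max (le_refl (0:ℝ)) (by linarith)
    have h2 : φmin p ≤ Y b + max 0 (p - X b) :=
      Finset.inf'_le (fun a => Y a + max 0 (p - X a)) (Finset.mem_univ b)
    linarith
  have hmin_lip : ∀ p q : ℝ, p ≤ q → φmin q ≤ φmin p + (q - p) := by
    intro p q hpq
    rw [← sub_le_iff_le_add]
    apply Finset.le_inf'
    intro b _
    have h3 : max 0 (q - X b) ≤ max 0 (p - X b) + (q - p) := by
      rcases le_total (q - X b) 0 with h | h
      · rw [max_eq_left h]
        have := le_max_left 0 (p - X b); linarith
      · rw [max_eq_right h]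
        have := le_max_right 0 (p - X b)
        have := le_max_left 0 (p - X b)
        rcases le_total (p - X b) 0 with h' | h'
        · rw [max_eq_left h']; linarith
        · rw [max_eq_right h']; linarith
    have h2 : φmin q ≤ Y b + max 0 (q - X b) :=
      Finset.inf'_le (fun a => Y a + max 0 (q - X a)) (Finset.mem_univ b)
    linarith
  have minmax : ∀ u : ℝ, min 0 (-u) = -max 0 u := by
    intro u
    rcases le_total u 0 with h | h
    · rw [max_eq_left h, min_eq_left (by linarith)]; simp
    · rw [max_eq_right h, min_eq_right (by linarith)]
  let ng : ι → ι := fun a => match a with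
    | none => none
    | some (i, false) => some (i, true)
    | some (i, true) => some (i, false)
  have hXng : ∀ a, X (ng a) = -X a := by
    rintro (_ | ⟨i, (_|_)⟩) <;> simp [X, ng]
  have hYng : ∀ a, Y (ng a) = -Y a := by
    rintro (_ | ⟨i, (_|_)⟩) <;> simp [Y, ng]
  have hodd : ∀ t : ℝ, φmax (-t) = -(φmin t) := by
    intro t
    apply le_antisymm
    · apply Finset.sup'_le
      intro b _
      have h2 : φmin t ≤ Y (ng b) + max 0 (t - X (ng b)) :=
        Finset.inf'_le (fun a => Y a + max 0 (t - X a)) (Finset.mem_univ _)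
      rw [hXng, hYng] at h2
      have h3 : min 0 (-t - X b) = -max 0 (t + X b) := by
        rw [show -t - X b = -(t + X b) by ring, minmax]
      have h4 : t - -X b = t + X b := by ring
      rw [h4] at h2
      linarith
    · rw [neg_le]
      apply Finset.le_inf'
      intro b _
      have h2 : Y (ng b) + min 0 (-t - X (ng b)) ≤ φmax (-t) :=
        Finset.le_sup' (fun a => Y a + min 0 (-t - X a)) (Finset.mem_univ _)
      rw [hXng, hYng] at h2
      have h3 : min 0 (-t - -X b) = -max 0 (t - X b) := by
        rw [show -t - -X b = -(t - X b) by ring, minmax]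
      rw [h3] at h2
      linarith
  refine ⟨fun t => (φmax t + φmin t) / 2, ?_, ?_, ?_, ?_⟩
  · intro t
    show (φmax (-t) + φmin (-t)) / 2 = -((φmax t + φmin t) / 2)
    have h1 := hodd t
    have h2 := hodd (-t)
    rw [neg_neg] at h2
    have h3 : φmin (-t) = -φmax t := by linarith
    rw [h1, h3]; ring
  · have h1 : φmax 0 = 0 := by
      have := hinterpmax none; simpa [X, Y] using this
    have h2 : φmin 0 = 0 := by
      have := hinterpmin none; simpa [X, Y] using this
    show (φmax 0 + φmin 0) / 2 = 0
    rw [h1, h2]; norm_num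
  · have slope : ∀ p q : ℝ, p < q →
        0 ≤ (φmax q + φmin q) / 2 - (φmax p + φmin p) / 2 ∧
        (φmax q + φmin q) / 2 - (φmax p + φmin p) / 2 ≤ q - p := by
      intro p q hpq
      have h1 := hmax_mono p q hpq.le
      have h2 := hmin_mono p q hpq.le
      have h3 := hmax_lip p q hpq.le
      have h4 := hmin_lip p q hpq.le
      constructor <;> linarith
    intro p q hpq
    show 0 ≤ ((φmax p + φmin p) / 2 - (φmax q + φmin q) / 2) / (p - q) ∧
      ((φmax p + φmin p) / 2 - (φmax q + φmin q) / 2) / (p - q) ≤ 1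
    rcases lt_or_gt_of_ne hpq with h | h
    · obtain ⟨h1, h2⟩ := slope p q h
      rw [show (φmax p + φmin p) / 2 - (φmax q + φmin q) / 2 =
        -((φmax q + φmin q) / 2 - (φmax p + φmin p) / 2) by ring,
        show p - q = -(q - p) by ring, neg_div_neg_eq]
      constructor
      · exact div_nonneg h1 (by linarith)
      · exact (div_le_one (by linarith)).mpr h2
    · obtain ⟨h1, h2⟩ := slope q p h
      constructor
      · exact div_nonneg h1 (by linarith)
      · exact (div_le_one (by linarith)).mpr h2
  · intro i
    have h1 : φmax (z i) = w i := by
      have := hinterpmax (some (i, false)); simpa [X, Y] using this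
    have h2 : φmin (z i) = w i := by
      have := hinterpmin (some (i, false)); simpa [X, Y] using this
    have h3 : φmax (-z i) = -w i := by
      have := hinterpmax (some (i, true)); simpa [X, Y] using this
    have h4 : φmin (-z i) = -w i := by
      have := hinterpmin (some (i, true)); simpa [X, Y] using this
    constructor
    · show (φmax (z i) + φmin (z i)) / 2 = w i
      rw [h1, h2]; ring
    · show (φmax (-z i) + φmin (-z i)) / 2 = -w i
      rw [h3, h4]; ring
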